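/- Double Markov property: let ξ_A, ξ_B, ξ_C be discrete random variables with nonempty finite ranges on a common probability space such that ξ_A ⊥ ξ_B | ξ_C and ξ_A ⊥ ξ_C | ξ_B. Then there exists a random variable ξ_W with a finite range on the same probability space (after possibly extending the vector) such that ξ_W is a function of ξ_B with probability one, ξ_W is a function of ξ_C with probability one, and ξ_A ⊥ (ξ_B, ξ_C) | ξ_W. -/

import Mathlib

open MeasureTheory

/-- The probability that the discrete random variable `f` takes the value `x`. -/
noncomputable def probOf {Ω S : Type*} [MeasurableSpace Ω] (μ : Measure Ω)
    (f : Ω → S) (x : S) : ℝ :=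
  (μ {ω | f ω = x}).toReal

/-- The Shannon entropy `−Σ_x p(x)·ln p(x)` of the distribution of a discrete
random variable `f` with finite range `S`. -/
noncomputable def entropyOf {Ω S : Type*} [MeasurableSpace Ω] [Fintype S]
    (μ : Measure Ω) (f : Ω → S) : ℝ :=
  ∑ x : S, Real.negMulLog (probOf μ f x)

/-- Conditional independence of discrete random variables:
`P(f = a, g = b, k = c) · P(k = c) = P(f = a, k = c) · P(g = b, k = c)` for all values. -/
def CondIndepRV {Ω A B C : Type*} [MeasurableSpace Ω] (μ : Measure Ω)
    (f : Ω → A) (g : Ω → B) (k : Ω → C) : Prop :=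
  ∀ (a : A) (b : B) (c : C),
    μ {ω | f ω = a ∧ g ω = b ∧ k ω = c} * μ {ω | k ω = c} =
    μ {ω | f ω = a ∧ k ω = c} * μ {ω | g ω = b ∧ k ω = c}

/-- Unconditional independence: the case of a constant conditioning variable. -/
def IndepRV {Ω A B : Type*} [MeasurableSpace Ω] (μ : Measure Ω)
    (f : Ω → A) (g : Ω → B) : Prop :=
  CondIndepRV μ f g (fun _ => ())

/-- double Markov property: if ξ_A ⊥ ξ_B | ξ_C and ξ_A ⊥ ξ_C | ξ_B,
then there is a finite-range random variable ξ_W on the same probability space that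
is almost surely a function of ξ_B, almost surely a function of ξ_C, and satisfies
ξ_A ⊥ (ξ_B, ξ_C) | ξ_W. -/
theorem double_markov_property
    {Ω : Type*} [MeasurableSpace Ω] (μ : Measure Ω) [IsProbabilityMeasure μ]
    {SA SB SC : Type*}
    [Fintype SA] [Nonempty SA] [MeasurableSpace SA] [MeasurableSingletonClass SA]
    [Fintype SB] [Nonempty SB] [MeasurableSpace SB] [MeasurableSingletonClass SB]
    [Fintype SC] [Nonempty SC] [MeasurableSpace SC] [MeasurableSingletonClass SC]
    (ξA : Ω → SA) (ξB : Ω → SB) (ξC : Ω → SC)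
    (mA : Measurable ξA) (mB : Measurable ξB) (mC : Measurable ξC)
    (h1 : CondIndepRV μ ξA ξB ξC) (h2 : CondIndepRV μ ξA ξC ξB) :
    ∃ (T : Type) (_ : Fintype T) (ξW : Ω → T),
      (∃ f : SB → T, μ {ω | ξW ω = f (ξB ω)} = 1) ∧
      (∃ g : SC → T, μ {ω | ξW ω = g (ξC ω)} = 1) ∧
      CondIndepRV μ ξA (fun ω => (ξB ω, ξC ω)) ξW := by
  classical
  -- the bipartite adjacency relation on SB
  set R : SB → SB → Prop := fun b b' =>
    ∃ c, μ {ω | ξB ω = b ∧ ξC ω = c} ≠ 0 ∧ μ {ω | ξB ω = b' ∧ ξC ω = c} ≠ 0 with hR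
  let s : Setoid SB := Relation.EqvGen.setoid R
  let f : SB → Fin (Fintype.card SB) :=
    fun b => Fintype.equivFin SB (Quotient.mk s b).out
  have hf : ∀ b b', f b = f b' ↔ Relation.EqvGen R b b' := by
    intro b b'
    constructor
    · intro h
      have h1 : (Quotient.mk s b) = (Quotient.mk s b') :=
        Quotient.out_inj.mp ((Fintype.equivFin SB).injective h)
      exact Quotient.exact h1
    · intro h
      have : (Quotient.mk s b) = (Quotient.mk s b') := Quotient.sound h
      simp only [f, this]
  -- measurability of basic sets
  have msB : ∀ b : SB, MeasurableSet {ω | ξB ω = b} :=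
    fun b => mB (measurableSet_singleton b)
  have msBC : ∀ (b : SB) (c : SC), MeasurableSet {ω | ξB ω = b ∧ ξC ω = c} :=
    fun b c => (mB (measurableSet_singleton b)).inter (mC (measurableSet_singleton c))
  -- finiteness of measures
  have fin : ∀ S : Set Ω, μ S ≠ ⊤ := fun S => measure_ne_top μ S
  -- L1 : transfer along an edge
  have L1 : ∀ (a : SA) (b : SB) (c : SC), μ {ω | ξB ω = b ∧ ξC ω = c} ≠ 0 →
      μ {ω | ξA ω = a ∧ ξB ω = b} * μ {ω | ξC ω = c} =
      μ {ω | ξA ω = a ∧ ξC ω = c} * μ {ω | ξB ω = b} := by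
    intro a b c hbc
    have e1 := h1 a b c
    have e2 := h2 a c b
    have s1 : {ω | ξA ω = a ∧ ξC ω = c ∧ ξB ω = b} = {ω | ξA ω = a ∧ ξB ω = b ∧ ξC ω = c} := by
      ext ω; constructor <;> rintro ⟨x, y, z⟩ <;> exact ⟨x, z, y⟩
    have s2 : {ω | ξC ω = c ∧ ξB ω = b} = {ω | ξB ω = b ∧ ξC ω = c} := by
      ext ω; constructor <;> rintro ⟨x, y⟩ <;> exact ⟨y, x⟩
    rw [s1, s2] at e2
    -- e1 : μABC * μC = μAC * μBC ; e2 : μABC * μB = μAB * μBC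
    have key : (μ {ω | ξA ω = a ∧ ξB ω = b} * μ {ω | ξC ω = c}) * μ {ω | ξB ω = b ∧ ξC ω = c}
        = (μ {ω | ξA ω = a ∧ ξC ω = c} * μ {ω | ξB ω = b}) * μ {ω | ξB ω = b ∧ ξC ω = c} := by
      calc (μ {ω | ξA ω = a ∧ ξB ω = b} * μ {ω | ξC ω = c}) * μ {ω | ξB ω = b ∧ ξC ω = c}
          = (μ {ω | ξA ω = a ∧ ξB ω = b} * μ {ω | ξB ω = b ∧ ξC ω = c}) * μ {ω | ξC ω = c} := by
            ring
        _ = (μ {ω | ξA ω = a ∧ ξB ω = b ∧ ξC ω = c} * μ {ω | ξB ω = b}) * μ {ω | ξC ω = c} := by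
            rw [← e2]
        _ = (μ {ω | ξA ω = a ∧ ξB ω = b ∧ ξC ω = c} * μ {ω | ξC ω = c}) * μ {ω | ξB ω = b} := by
            ring
        _ = (μ {ω | ξA ω = a ∧ ξC ω = c} * μ {ω | ξB ω = b ∧ ξC ω = c}) * μ {ω | ξB ω = b} := by
            rw [e1]
        _ = (μ {ω | ξA ω = a ∧ ξC ω = c} * μ {ω | ξB ω = b}) * μ {ω | ξB ω = b ∧ ξC ω = c} := by
            ring
    exact (ENNReal.mul_left_inj hbc (fin _)).mp key
  -- positivity of marginals near an edge
  have posB : ∀ (b : SB) (c : SC), μ {ω | ξB ω = b ∧ ξC ω = c} ≠ 0 → μ {ω | ξB ω = b} ≠ 0 := by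
    intro b c h h0
    exact h (le_antisymm (le_trans (measure_mono (fun ω hω => hω.1)) h0.le) zero_le)
  have posC : ∀ (b : SB) (c : SC), μ {ω | ξB ω = b ∧ ξC ω = c} ≠ 0 → μ {ω | ξC ω = c} ≠ 0 := by
    intro b c h h0
    exact h (le_antisymm (le_trans (measure_mono (fun ω hω => hω.2)) h0.le) zero_le)
  -- L3 : constancy along components
  have L3 : ∀ b b', Relation.EqvGen R b b' → b = b' ∨
      (μ {ω | ξB ω = b} ≠ 0 ∧ μ {ω | ξB ω = b'} ≠ 0 ∧ ∀ a : SA,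
        μ {ω | ξA ω = a ∧ ξB ω = b} * μ {ω | ξB ω = b'} =
        μ {ω | ξA ω = a ∧ ξB ω = b'} * μ {ω | ξB ω = b}) := by
    intro b b' h
    induction h with
    | rel x y hxy =>
      obtain ⟨c, hx, hy⟩ := hxy
      right
      refine ⟨posB x c hx, posB y c hy, fun a => ?_⟩
      have e1 := L1 a x c hx
      have e2 := L1 a y c hy
      have hc := posC x c hx
      have key : (μ {ω | ξA ω = a ∧ ξB ω = x} * μ {ω | ξB ω = y}) * μ {ω | ξC ω = c}
          = (μ {ω | ξA ω = a ∧ ξB ω = y} * μ {ω | ξB ω = x}) * μ {ω | ξC ω = c} := by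
        calc (μ {ω | ξA ω = a ∧ ξB ω = x} * μ {ω | ξB ω = y}) * μ {ω | ξC ω = c}
            = (μ {ω | ξA ω = a ∧ ξB ω = x} * μ {ω | ξC ω = c}) * μ {ω | ξB ω = y} := by ring
          _ = (μ {ω | ξA ω = a ∧ ξC ω = c} * μ {ω | ξB ω = x}) * μ {ω | ξB ω = y} := by rw [e1]
          _ = (μ {ω | ξA ω = a ∧ ξC ω = c} * μ {ω | ξB ω = y}) * μ {ω | ξB ω = x} := by ring
          _ = (μ {ω | ξA ω = a ∧ ξB ω = y} * μ {ω | ξC ω = c}) * μ {ω | ξB ω = x} := by rw [e2]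
          _ = (μ {ω | ξA ω = a ∧ ξB ω = y} * μ {ω | ξB ω = x}) * μ {ω | ξC ω = c} := by ring
      exact (ENNReal.mul_left_inj hc (fin _)).mp key
    | refl x => exact Or.inl rfl
    | symm x y _ ih =>
      rcases ih with h | ⟨hx, hy, h⟩
      · exact Or.inl h.symm
      · exact Or.inr ⟨hy, hx, fun a => (h a).symm⟩
    | trans x y z _ _ ih1 ih2 =>
      rcases ih1 with h | ⟨hx, hy, hxy⟩
      · rw [h]; exact ih2
      · rcases ih2 with h | ⟨hy', hz, hyz⟩
        · rw [← h]; exact Or.inr ⟨hx, hy, hxy⟩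
        · refine Or.inr ⟨hx, hz, fun a => ?_⟩
          have key : (μ {ω | ξA ω = a ∧ ξB ω = x} * μ {ω | ξB ω = z}) * μ {ω | ξB ω = y}
              = (μ {ω | ξA ω = a ∧ ξB ω = z} * μ {ω | ξB ω = x}) * μ {ω | ξB ω = y} := by
            calc (μ {ω | ξA ω = a ∧ ξB ω = x} * μ {ω | ξB ω = z}) * μ {ω | ξB ω = y}
                = (μ {ω | ξA ω = a ∧ ξB ω = x} * μ {ω | ξB ω = y}) * μ {ω | ξB ω = z} := by ring
              _ = (μ {ω | ξA ω = a ∧ ξB ω = y} * μ {ω | ξB ω = x}) * μ {ω | ξB ω = z} := by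
                  rw [hxy a]
              _ = (μ {ω | ξA ω = a ∧ ξB ω = y} * μ {ω | ξB ω = z}) * μ {ω | ξB ω = x} := by ring
              _ = (μ {ω | ξA ω = a ∧ ξB ω = z} * μ {ω | ξB ω = y}) * μ {ω | ξB ω = x} := by
                  rw [hyz a]
              _ = (μ {ω | ξA ω = a ∧ ξB ω = z} * μ {ω | ξB ω = x}) * μ {ω | ξB ω = y} := by ring
          exact (ENNReal.mul_left_inj hy (fin _)).mp key
  -- key termwise identity
  have key : ∀ (a : SA) (b b' : SB) (c : SC), Relation.EqvGen R b b' →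
      μ {ω | ξA ω = a ∧ ξB ω = b ∧ ξC ω = c} * μ {ω | ξB ω = b'} =
      μ {ω | ξA ω = a ∧ ξB ω = b'} * μ {ω | ξB ω = b ∧ ξC ω = c} := by
    intro a b b' c hbb
    by_cases hbc : μ {ω | ξB ω = b ∧ ξC ω = c} = 0
    · have h0 : μ {ω | ξA ω = a ∧ ξB ω = b ∧ ξC ω = c} = 0 :=
        le_antisymm (le_trans (measure_mono (fun ω hω => hω.2)) hbc.le) zero_le
      rw [h0, hbc, zero_mul, mul_zero]
    · -- h2 gives μ{A,b,c} * μ{b} = μ{A,b} * μ{b,c}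
      have e2 := h2 a c b
      have s1 : {ω | ξA ω = a ∧ ξC ω = c ∧ ξB ω = b} = {ω | ξA ω = a ∧ ξB ω = b ∧ ξC ω = c} := by
        ext ω; constructor <;> rintro ⟨x, y, z⟩ <;> exact ⟨x, z, y⟩
      have s2 : {ω | ξC ω = c ∧ ξB ω = b} = {ω | ξB ω = b ∧ ξC ω = c} := by
        ext ω; constructor <;> rintro ⟨x, y⟩ <;> exact ⟨y, x⟩
      rw [s1, s2] at e2
      rcases L3 b b' hbb with h | ⟨hb, _, h⟩
      · rw [← h]; exact e2
      · have keyx : (μ {ω | ξA ω = a ∧ ξB ω = b ∧ ξC ω = c} * μ {ω | ξB ω = b'}) * μ {ω | ξB ω = b}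
            = (μ {ω | ξA ω = a ∧ ξB ω = b'} * μ {ω | ξB ω = b ∧ ξC ω = c}) * μ {ω | ξB ω = b} := by
          calc (μ {ω | ξA ω = a ∧ ξB ω = b ∧ ξC ω = c} * μ {ω | ξB ω = b'}) * μ {ω | ξB ω = b}
              = (μ {ω | ξA ω = a ∧ ξB ω = b ∧ ξC ω = c} * μ {ω | ξB ω = b}) * μ {ω | ξB ω = b'} := by
                ring
            _ = (μ {ω | ξA ω = a ∧ ξB ω = b} * μ {ω | ξB ω = b ∧ ξC ω = c}) * μ {ω | ξB ω = b'} := by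
                rw [e2]
            _ = (μ {ω | ξA ω = a ∧ ξB ω = b} * μ {ω | ξB ω = b'}) * μ {ω | ξB ω = b ∧ ξC ω = c} := by
                ring
            _ = (μ {ω | ξA ω = a ∧ ξB ω = b'} * μ {ω | ξB ω = b}) * μ {ω | ξB ω = b ∧ ξC ω = c} := by
                rw [h a]
            _ = (μ {ω | ξA ω = a ∧ ξB ω = b'} * μ {ω | ξB ω = b ∧ ξC ω = c}) * μ {ω | ξB ω = b} := by
                ring
        exact (ENNReal.mul_left_inj hb (fin _)).mp keyx
  -- fiber decomposition over values of ξB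
  have fiber : ∀ (S : Set Ω), MeasurableSet S →
      μ S = ∑ b : SB, μ (S ∩ {ω | ξB ω = b}) := by
    intro S hS
    have hU : S = ⋃ b : SB, S ∩ {ω | ξB ω = b} := by
      ext ω; simp
    have hd : Pairwise (Function.onFun Disjoint fun b : SB => S ∩ {ω | ξB ω = b}) := by
      intro b b' hbb
      simp only [Function.onFun, Set.disjoint_left]
      rintro ω ⟨_, h1⟩ ⟨_, h2⟩
      exact hbb (h1 ▸ h2 ▸ rfl)
    calc μ S = μ (⋃ b : SB, S ∩ {ω | ξB ω = b}) := by rw [← hU]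
      _ = ∑' b : SB, μ (S ∩ {ω | ξB ω = b}) :=
          measure_iUnion hd fun b => hS.inter (msB b)
      _ = ∑ b : SB, μ (S ∩ {ω | ξB ω = b}) := tsum_fintype _
  -- decomposition of {W = w} and {A = a, W = w}
  have decompW : ∀ w, μ {ω | f (ξB ω) = w} =
      ∑ b : SB, if f b = w then μ {ω | ξB ω = b} else 0 := by
    intro w
    have hm : MeasurableSet {ω | f (ξB ω) = w} := mB (Set.toFinite {b | f b = w}).measurableSet
    rw [fiber _ hm]
    refine Finset.sum_congr rfl fun b _ => ?_
    by_cases hb : f b = w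
    · rw [if_pos hb]
      congr 1
      ext ω; simp only [Set.mem_inter_iff, Set.mem_setOf_eq]
      constructor
      · rintro ⟨_, h⟩; exact h
      · intro h; exact ⟨h ▸ hb, h⟩
    · rw [if_neg hb]
      have he : {ω | f (ξB ω) = w} ∩ {ω | ξB ω = b} = (∅ : Set Ω) := by
        ext ω; simp only [Set.mem_inter_iff, Set.mem_setOf_eq, Set.mem_empty_iff_false, iff_false]
        rintro ⟨h1, h2⟩; exact hb (h2 ▸ h1)
      rw [he, measure_empty]
  have decompAW : ∀ (a : SA) (w), μ {ω | ξA ω = a ∧ f (ξB ω) = w} =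
      ∑ b : SB, if f b = w then μ {ω | ξA ω = a ∧ ξB ω = b} else 0 := by
    intro a w
    have hm : MeasurableSet {ω | ξA ω = a ∧ f (ξB ω) = w} :=
      (mA (measurableSet_singleton a)).inter (mB (Set.toFinite {b | f b = w}).measurableSet)
    rw [fiber _ hm]
    refine Finset.sum_congr rfl fun b _ => ?_
    by_cases hb : f b = w
    · rw [if_pos hb]
      congr 1
      ext ω; simp only [Set.mem_inter_iff, Set.mem_setOf_eq]
      constructor
      · rintro ⟨⟨ha, _⟩, h⟩; exact ⟨ha, h⟩
      · rintro ⟨ha, h⟩; exact ⟨⟨ha, h ▸ hb⟩, h⟩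
    · rw [if_neg hb]
      have he : {ω | ξA ω = a ∧ f (ξB ω) = w} ∩ {ω | ξB ω = b} = (∅ : Set Ω) := by
        ext ω; simp only [Set.mem_inter_iff, Set.mem_setOf_eq, Set.mem_empty_iff_false, iff_false]
        rintro ⟨⟨_, h1⟩, h2⟩; exact hb (h2 ▸ h1)
      rw [he, measure_empty]
  -- the function g on SC
  let g : SC → Fin (Fintype.card SB) := fun c =>
    if h : ∃ b, μ {ω | ξB ω = b ∧ ξC ω = c} ≠ 0 then f h.choose
    else f (Classical.arbitrary SB)
  have hg : ∀ (b : SB) (c : SC), μ {ω | ξB ω = b ∧ ξC ω = c} ≠ 0 → f b = g c := by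
    intro b c hbc
    have hex : ∃ b, μ {ω | ξB ω = b ∧ ξC ω = c} ≠ 0 := ⟨b, hbc⟩
    have : g c = f hex.choose := by simp only [g, dif_pos hex]
    rw [this]
    exact (hf b hex.choose).mpr (Relation.EqvGen.rel _ _ ⟨c, hbc, hex.choose_spec⟩)
  refine ⟨Fin (Fintype.card SB), inferInstance, fun ω => f (ξB ω), ⟨f, ?_⟩, ⟨g, ?_⟩, ?_⟩
  · have : {ω : Ω | f (ξB ω) = f (ξB ω)} = Set.univ := by ext ω; simp
    rw [this, measure_univ]
  · -- a.s. equal to g ∘ ξC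
    have hm : MeasurableSet {ω | f (ξB ω) = g (ξC ω)} := by
      have : {ω | f (ξB ω) = g (ξC ω)} =
          ⋃ t : Fin (Fintype.card SB), {ω | f (ξB ω) = t} ∩ {ω | g (ξC ω) = t} := by
        ext ω
        simp only [Set.mem_setOf_eq, Set.mem_iUnion, Set.mem_inter_iff]
        exact ⟨fun h => ⟨f (ξB ω), rfl, h.symm⟩, fun ⟨t, h1, h2⟩ => h1.trans h2.symm⟩
      rw [this]
      exact MeasurableSet.iUnion fun t =>
        (mB (Set.toFinite {b | f b = t}).measurableSet).inter
        (mC (Set.toFinite {c | g c = t}).measurableSet)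
    rw [← prob_compl_eq_zero_iff hm]
    have hsub : {ω | f (ξB ω) = g (ξC ω)}ᶜ ⊆
        ⋃ p : SB × SC, {ω | ξB ω = p.1 ∧ ξC ω = p.2 ∧ f p.1 ≠ g p.2} := by
      intro ω hω
      exact Set.mem_iUnion.mpr ⟨(ξB ω, ξC ω), rfl, rfl, hω⟩
    refine measure_mono_null hsub (measure_iUnion_null fun p => ?_)
    by_cases h : f p.1 = g p.2
    · have he : {ω | ξB ω = p.1 ∧ ξC ω = p.2 ∧ f p.1 ≠ g p.2} = (∅ : Set Ω) := by
        ext ω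
        simp only [Set.mem_setOf_eq, Set.mem_empty_iff_false, iff_false]
        rintro ⟨_, _, hne⟩; exact hne h
      rw [he, measure_empty]
    · have h0 : μ {ω | ξB ω = p.1 ∧ ξC ω = p.2} = 0 := by
        by_contra hc
        exact h (hg p.1 p.2 hc)
      refine le_antisymm (le_trans (measure_mono ?_) h0.le) zero_le
      rintro ω ⟨x, y, _⟩; exact ⟨x, y⟩
  · -- conditional independence
    intro a p w
    obtain ⟨b, c⟩ := p
    by_cases hw : f b = w
    · have s1 : {ω | ξA ω = a ∧ (ξB ω, ξC ω) = (b, c) ∧ f (ξB ω) = w} =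
          {ω | ξA ω = a ∧ ξB ω = b ∧ ξC ω = c} := by
        ext ω
        simp only [Set.mem_setOf_eq, Prod.mk.injEq]
        constructor
        · rintro ⟨ha, ⟨hb, hc⟩, _⟩; exact ⟨ha, hb, hc⟩
        · rintro ⟨ha, hb, hc⟩; exact ⟨ha, ⟨hb, hc⟩, hb ▸ hw⟩
      have s2 : {ω | (ξB ω, ξC ω) = (b, c) ∧ f (ξB ω) = w} =
          {ω | ξB ω = b ∧ ξC ω = c} := by
        ext ω
        simp only [Set.mem_setOf_eq, Prod.mk.injEq]
        constructor
        · rintro ⟨⟨hb, hc⟩, _⟩; exact ⟨hb, hc⟩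
        · rintro ⟨hb, hc⟩; exact ⟨⟨hb, hc⟩, hb ▸ hw⟩
      rw [s1, s2, decompW w, decompAW a w, Finset.mul_sum, Finset.sum_mul]
      refine Finset.sum_congr rfl fun b' _ => ?_
      by_cases hb' : f b' = w
      · rw [if_pos hb', if_pos hb']
        exact key a b b' c ((hf b b').mp (hw.trans hb'.symm))
      · rw [if_neg hb', if_neg hb', mul_zero, zero_mul]
    · have s1 : {ω | ξA ω = a ∧ (ξB ω, ξC ω) = (b, c) ∧ f (ξB ω) = w} = ∅ := by
        ext ω
        simp only [Set.mem_setOf_eq, Prod.mk.injEq, Set.mem_empty_iff_false, iff_false]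
        rintro ⟨_, ⟨hb, _⟩, hww⟩
        exact hw (hb ▸ hww)
      have s2 : {ω | (ξB ω, ξC ω) = (b, c) ∧ f (ξB ω) = w} = ∅ := by
        ext ω
        simp only [Set.mem_setOf_eq, Prod.mk.injEq, Set.mem_empty_iff_false, iff_false]
        rintro ⟨⟨hb, _⟩, hww⟩
        exact hw (hb ▸ hww)
      rw [s1, s2, measure_empty, zero_mul, mul_zero]
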